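/- arXiv:2107.03097 — 6 statements merged into one kernel-verified Lean document; each statement's English description precedes it below -/
import Mathlib

section
/- Let γ_0, γ_1, γ_2, c, k be positive real numbers with γ_2 ≠ 1, and let u_1, u_2 be integers with |u_1| ≤ M and |u_2| ≤ M for a positive number M. Assume that |log γ_0 + u_1 log γ_1 + u_2 log γ_2| < c·w^{−k} holds for a positive number w. Let p/q be a convergent of the continued fraction expansion of (log γ_1)/(log γ_2). If ε := ‖q·(log γ_0)/(log γ_2)‖ − M·‖q·(log γ_1)/(log γ_2)‖ is positive, then w < (q·c/(ε·|log γ_2|))^{1/k}. -/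
lemma bd_round_le_abs (x : ℝ) : |x - round x| ≤ |x| := by
  simpa using round_le x 0

lemma bd_round_zsmul (n : ℤ) (x : ℝ) :
    |(n : ℝ) * x - round ((n : ℝ) * x)| ≤ |(n : ℝ)| * |x - round x| := by
  calc |(n : ℝ) * x - round ((n : ℝ) * x)| ≤ |(n : ℝ) * x - ((n * round x : ℤ) : ℝ)| :=
        round_le _ _
    _ = |(n : ℝ)| * |x - round x| := by
        push_cast
        rw [← abs_mul]; ring_nf

lemma bd_round_sub (a b : ℝ) :
    |a - round a| ≤ |a + b - round (a + b)| + |b - round b| := by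
  calc |a - round a| ≤ |a - ((round (a + b) - round b : ℤ) : ℝ)| := round_le _ _
    _ = |(a + b - round (a + b)) - (b - round b)| := by push_cast; ring_nf
    _ ≤ |a + b - round (a + b)| + |b - round b| := abs_sub _ _

/-- Baker–Davenport reduction: if `|log γ₀ + u₁ log γ₁ + u₂ log γ₂| < c·w^(−k)`,
`p/q` is a convergent of the continued fraction of `log γ₁ / log γ₂`, and
`ε = ‖q·(log γ₀/log γ₂)‖ − M·‖q·(log γ₁/log γ₂)‖ > 0`, then
`w < (q·c/(ε·|log γ₂|))^(1/k)`.  Here `‖x‖ = |x - round x|` is the distance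
to the nearest integer. -/
theorem baker_davenport_reduction
    (γ0 γ1 γ2 c k M w : ℝ) (u1 u2 : ℤ) (p : ℤ) (q : ℕ) (m : ℕ)
    (hγ0 : 0 < γ0) (hγ1 : 0 < γ1) (hγ2 : 0 < γ2) (hγ2ne : γ2 ≠ 1)
    (hc : 0 < c) (hk : 0 < k) (hM : 0 < M) (hw : 0 < w) (hq : 0 < q)
    (hu1 : |(u1 : ℝ)| ≤ M) (hu2 : |(u2 : ℝ)| ≤ M)
    (hconv : ((p : ℝ) / (q : ℝ)) = (GenContFract.of (Real.log γ1 / Real.log γ2)).convs m)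
    (hΛ : |Real.log γ0 + (u1 : ℝ) * Real.log γ1 + (u2 : ℝ) * Real.log γ2| < c * w ^ (-k))
    (ε : ℝ)
    (hε : ε =
      |(q : ℝ) * (Real.log γ0 / Real.log γ2) -
          (round ((q : ℝ) * (Real.log γ0 / Real.log γ2)) : ℤ)| -
        M * |(q : ℝ) * (Real.log γ1 / Real.log γ2) -
          (round ((q : ℝ) * (Real.log γ1 / Real.log γ2)) : ℤ)|)
    (hεpos : 0 < ε) :
    w < ((q : ℝ) * c / (ε * |Real.log γ2|)) ^ (1 / k) := by
  set L2 := Real.log γ2 with hL2def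
  have hL2 : L2 ≠ 0 := Real.log_ne_zero_of_pos_of_ne_one hγ2 hγ2ne
  have hL2abs : 0 < |L2| := abs_pos.mpr hL2
  set Λ : ℝ := Real.log γ0 + (u1 : ℝ) * Real.log γ1 + (u2 : ℝ) * L2 with hΛdef
  set x := (q : ℝ) * (Real.log γ0 / L2) with hxdef
  set y := (q : ℝ) * (Real.log γ1 / L2) with hydef
  -- key identity
  have hkey : x + (u1 : ℝ) * y = (q : ℝ) * Λ / L2 - ((q : ℤ) * u2 : ℤ) := by
    push_cast
    rw [eq_sub_iff_add_eq, eq_div_iff hL2, hxdef, hydef, hΛdef]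
    field_simp
  -- ε ≤ |x + u1*y - round (x + u1*y)|
  have h1 : ε ≤ |x + (u1 : ℝ) * y - round (x + (u1 : ℝ) * y)| := by
    have hsub := bd_round_sub x ((u1 : ℝ) * y)
    have hmul : |(u1 : ℝ) * y - round ((u1 : ℝ) * y)| ≤ M * |y - round y| := by
      calc |(u1 : ℝ) * y - round ((u1 : ℝ) * y)| ≤ |(u1 : ℝ)| * |y - round y| :=
            bd_round_zsmul u1 y
        _ ≤ M * |y - round y| := by
            exact mul_le_mul_of_nonneg_right hu1 (abs_nonneg _)
    rw [hε]
    linarith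
  -- the distance is bounded by |q*Λ/L2|
  have h2 : |x + (u1 : ℝ) * y - round (x + (u1 : ℝ) * y)| ≤ |(q : ℝ) * Λ / L2| := by
    calc |x + (u1 : ℝ) * y - round (x + (u1 : ℝ) * y)|
        ≤ |x + (u1 : ℝ) * y - ((-((q : ℤ) * u2) : ℤ) : ℝ)| := round_le _ _
      _ = |(q : ℝ) * Λ / L2| := by rw [hkey]; push_cast; ring_nf
  have hqpos : (0:ℝ) < q := by exact_mod_cast hq
  have h3 : (q : ℝ) * |Λ| / |L2| < (q : ℝ) * (c * w ^ (-k)) / |L2| := by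
    gcongr
  have habs : |(q : ℝ) * Λ / L2| = (q : ℝ) * |Λ| / |L2| := by
    rw [abs_div, abs_mul, Nat.abs_cast]
  have h4 : ε * |L2| < (q : ℝ) * c * w ^ (-k) := by
    have h := (h1.trans h2).trans_lt (habs ▸ h3)
    have := (lt_div_iff₀ hL2abs).mp h
    linarith
  have hwk : (0:ℝ) < w ^ k := Real.rpow_pos_of_pos hw k
  have h5 : w ^ k < (q : ℝ) * c / (ε * |L2|) := by
    rw [Real.rpow_neg hw.le] at h4
    rw [lt_div_iff₀ (by positivity : (0:ℝ) < ε * |L2|)]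
    have h6 : ε * |L2| * (w ^ k) < (q : ℝ) * c * ((w ^ k)⁻¹ * (w ^ k)) := by
      exact mul_lt_mul_of_pos_right h4 hwk |>.trans_le (by rw [mul_assoc])
    rw [inv_mul_cancel₀ hwk.ne', mul_one] at h6
    linarith
  have hw_eq : w = (w ^ k) ^ (1 / k) := by
    rw [← Real.rpow_mul hw.le, mul_one_div_cancel hk.ne', Real.rpow_one]
  calc w = (w ^ k) ^ (1 / k) := hw_eq
    _ < ((q : ℝ) * c / (ε * |L2|)) ^ (1 / k) :=
        Real.rpow_lt_rpow hwk.le h5 (by positivity)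
end

section
/- Let x, c, a be positive real numbers with x ≥ 1, a ≥ 2 and x < c·(a + log x). Then x < 2c·(a + log c). -/
/-- If `x ≥ 1`, `a ≥ 2`, `c > 0` and `x < c(a + log x)`, then `x < 2c(a + log c)`. -/
theorem lt_of_lt_mul_add_log (x c a : ℝ) (hx : 1 ≤ x) (hc : 0 < c) (ha : 2 ≤ a)
    (h : x < c * (a + Real.log x)) : x < 2 * c * (a + Real.log c) := by
  have hxc : 0 < x / (2 * c) := by positivity
  have h1 : Real.log x - Real.log (2 * c) ≤ x / (2 * c) - 1 := by
    have := Real.log_le_sub_one_of_pos hxc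
    rwa [Real.log_div (by linarith) (by positivity)] at this
  have h2 : Real.log (2 * c) = Real.log 2 + Real.log c :=
    Real.log_mul two_ne_zero hc.ne'
  have h3 : Real.log 2 ≤ 1 := by
    have := Real.log_le_sub_one_of_pos (show (0:ℝ) < 2 by norm_num)
    linarith
  have h4 : c * (x / (2 * c)) = x / 2 := by field_simp
  nlinarith [mul_le_mul_of_nonneg_left h1 hc.le]
end

section
/- Let r and s be integers with 2 ≤ r ≤ s − 2 and let f(X) = X·(X − r)·(X − s) − 1. Then f is irreducible over ℚ and has three distinct real roots. -/
open Polynomial in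
/-- For integers `2 ≤ r ≤ s - 2`, the polynomial `f(X) = X(X - r)(X - s) - 1`
is irreducible over `ℚ` and has three distinct real roots. -/
theorem thomas_cubic_irreducible_three_real_roots (r s : ℤ) (hr : 2 ≤ r) (hs : r ≤ s - 2) :
    Irreducible ((X * (X - C (r : ℚ)) * (X - C (s : ℚ)) - 1 : Polynomial ℚ)) ∧
    ∃ a b c : ℝ, a < b ∧ b < c ∧
      a * (a - (r : ℝ)) * (a - (s : ℝ)) - 1 = 0 ∧
      b * (b - (r : ℝ)) * (b - (s : ℝ)) - 1 = 0 ∧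
      c * (c - (r : ℝ)) * (c - (s : ℝ)) - 1 = 0 := by
  constructor
  · -- irreducibility
    set p : Polynomial ℚ := X * (X - C (r : ℚ)) * (X - C (s : ℚ)) - 1 with hp
    have hdeg : p.natDegree = 3 := by
      rw [hp]
      compute_degree!
    rw [Polynomial.irreducible_iff_roots_eq_zero_of_degree_le_three (by omega) (by omega)]
    rw [Multiset.eq_zero_iff_forall_notMem]
    intro q hq
    have hp0 : p ≠ 0 := fun h => by simp [h] at hdeg
    rw [Polynomial.mem_roots hp0] at hq
    have hq' : q * (q - (r : ℚ)) * (q - (s : ℚ)) - 1 = 0 := by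
      have := hq
      simp only [hp, Polynomial.IsRoot, Polynomial.eval_sub, Polynomial.eval_mul,
        Polynomial.eval_X, Polynomial.eval_C, Polynomial.eval_one] at this
      exact this
    -- q is a root of a monic integer polynomial, hence an integer
    have hmonic : (X * (X - C r) * (X - C s) - 1 : Polynomial ℤ).Monic := by
      have : (X * (X - C r) * (X - C s) - 1 : Polynomial ℤ).natDegree = 3 := by
        compute_degree!
      unfold Polynomial.Monic
      rw [Polynomial.leadingCoeff, this]
      compute_degree!
    have haev : Polynomial.aeval q (X * (X - C r) * (X - C s) - 1 : Polynomial ℤ) = 0 := by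
      simp only [map_sub, map_mul, map_one, Polynomial.aeval_X, Polynomial.aeval_C,
        algebraMap_int_eq, eq_intCast, map_intCast]
      linarith [hq']
    obtain ⟨n, hn⟩ := isInteger_of_is_root_of_monic hmonic haev
    have hqn : q = (n : ℚ) := by rw [← hn]; rfl
    rw [hqn] at hq'
    have hint : n * (n - r) * (n - s) = 1 := by
      have : ((n * (n - r) * (n - s) : ℤ) : ℚ) = ((1 : ℤ) : ℚ) := by push_cast; linarith
      exact_mod_cast this
    have h1 : n ∣ 1 := ⟨(n - r) * (n - s), by rw [← hint]; ring⟩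
    have h2 : (n - s) ∣ 1 := ⟨n * (n - r), by rw [← hint]; ring⟩
    have h1' := Int.isUnit_iff.mp (isUnit_of_dvd_one h1)
    have h2' := Int.isUnit_iff.mp (isUnit_of_dvd_one h2)
    omega
  · -- three real roots
    set g : ℝ → ℝ := fun x => x * (x - (r : ℝ)) * (x - (s : ℝ)) - 1 with hg
    have hcont : Continuous g := by continuity
    have hrr : (2 : ℝ) ≤ (r : ℝ) := by exact_mod_cast hr
    have hss : (r : ℝ) + 2 ≤ (s : ℝ) := by
      have : r + 2 ≤ s := by omega
      exact_mod_cast this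
    have hg0 : g 0 < 0 := by simp [hg]
    have hg1 : 0 < g 1 := by simp only [hg]; nlinarith
    have hgr : g ((r : ℝ) + 1) < 0 := by simp only [hg]; nlinarith
    have hgs : 0 < g ((s : ℝ) + 1) := by simp only [hg]; nlinarith
    obtain ⟨a, ha, hga⟩ := intermediate_value_Ioo (by norm_num : (0:ℝ) ≤ 1)
      hcont.continuousOn (by constructor <;> [exact hg0; exact hg1] : (0:ℝ) ∈ Set.Ioo (g 0) (g 1))
    obtain ⟨b, hb, hgb⟩ := intermediate_value_Ioo' (by nlinarith : (1:ℝ) ≤ (r : ℝ) + 1)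
      hcont.continuousOn (by exact ⟨hgr, hg1⟩ : (0:ℝ) ∈ Set.Ioo (g ((r:ℝ)+1)) (g 1))
    obtain ⟨c, hc, hgc⟩ := intermediate_value_Ioo (by nlinarith : (r:ℝ) + 1 ≤ (s : ℝ) + 1)
      hcont.continuousOn (by exact ⟨hgr, hgs⟩ : (0:ℝ) ∈ Set.Ioo (g ((r:ℝ)+1)) (g ((s:ℝ)+1)))
    exact ⟨a, b, c, lt_trans ha.2 hb.1, lt_trans hb.2 hc.1, hga, hgb, hgc⟩
end

section
/- Let n ≥ 29 be an integer, let F_n be the n-th Fibonacci number, and set G_1 = 0, G_2 = F_n, G_3 = 2^n. Then the polynomial f_n(X) = X·(X − F_n)·(X − 2^n) − 1 has three distinct real roots α^(1) < α^(2) < α^(3), and they satisfy |α^(i) − G_i| ≤ 0.5^n for i = 1, 2, 3. -/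
private lemma two_fib_le_two_pow : ∀ n : ℕ, 2 * Nat.fib n ≤ 2 ^ n := by
  intro n
  induction n using Nat.twoStepInduction with
  | zero => simp
  | one => simp
  | more n ih1 ih2 =>
    rw [Nat.fib_add_two]
    have : 2 ^ (n + 2) = 2 ^ n + 2 ^ n + 2 ^ (n+1) := by ring
    omega

private lemma cubic_roots (p q r x y z t : ℝ) (hxy : x ≠ y) (hxz : x ≠ z) (hyz : y ≠ z)
    (hx : x ^ 3 + p * x ^ 2 + q * x + r = 0)
    (hy : y ^ 3 + p * y ^ 2 + q * y + r = 0)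
    (hz : z ^ 3 + p * z ^ 2 + q * z + r = 0)
    (ht : t ^ 3 + p * t ^ 2 + q * t + r = 0) :
    t = x ∨ t = y ∨ t = z := by
  set a : ℝ := (x + y + z) + p with ha_def
  set b : ℝ := q - (x*y + x*z + y*z) with hb_def
  set c : ℝ := x*y*z + r with hc_def
  have hq1 : a * x ^ 2 + b * x + c = 0 := by rw [ha_def, hb_def, hc_def]; linear_combination hx
  have hq2 : a * y ^ 2 + b * y + c = 0 := by rw [ha_def, hb_def, hc_def]; linear_combination hy
  have hq3 : a * z ^ 2 + b * z + c = 0 := by rw [ha_def, hb_def, hc_def]; linear_combination hz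
  have e12 : a * (x + y) + b = 0 := by
    apply mul_left_cancel₀ (sub_ne_zero.mpr hxy)
    rw [mul_zero]; linear_combination hq1 - hq2
  have e13 : a * (x + z) + b = 0 := by
    apply mul_left_cancel₀ (sub_ne_zero.mpr hxz)
    rw [mul_zero]; linear_combination hq1 - hq3
  have ha : a = 0 := by
    apply mul_left_cancel₀ (sub_ne_zero.mpr hyz)
    rw [mul_zero]; linear_combination e12 - e13
  have hb : b = 0 := by linear_combination e12 - (x + y) * ha
  have hc : c = 0 := by linear_combination hq1 - x^2 * ha - x * hb
  have hprod : (t - x) * (t - y) * (t - z) = 0 := by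
    linear_combination ht - t^2 * ha - t * hb - hc
  rcases mul_eq_zero.mp hprod with h | h
  · rcases mul_eq_zero.mp h with h | h
    · exact Or.inl (sub_eq_zero.mp h)
    · exact Or.inr (Or.inl (sub_eq_zero.mp h))
  · exact Or.inr (Or.inr (sub_eq_zero.mp h))

/-- For `n ≥ 29`, the polynomial `fₙ(X) = X(X - Fₙ)(X - 2ⁿ) - 1` has three distinct
real roots `α⁽¹⁾ < α⁽²⁾ < α⁽³⁾`, which satisfy `|α⁽ⁱ⁾ - Gᵢ| ≤ 0.5ⁿ` for
`G₁ = 0`, `G₂ = Fₙ`, `G₃ = 2ⁿ`. -/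
theorem roots_estimate (n : ℕ) (hn : 29 ≤ n) :
    ∃ α : Fin 3 → ℝ, α 0 < α 1 ∧ α 1 < α 2 ∧
      (∀ i, α i * (α i - (Nat.fib n : ℝ)) * (α i - 2 ^ n) - 1 = 0) ∧
      (∀ x : ℝ, x * (x - (Nat.fib n : ℝ)) * (x - 2 ^ n) - 1 = 0 →
        x = α 0 ∨ x = α 1 ∨ x = α 2) ∧
      |α 0 - 0| ≤ (0.5 : ℝ) ^ n ∧ |α 1 - (Nat.fib n : ℝ)| ≤ (0.5 : ℝ) ^ n ∧
      |α 2 - 2 ^ n| ≤ (0.5 : ℝ) ^ n := by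
  set F : ℝ := (Nat.fib n : ℝ) with hF_def
  set T : ℝ := (2 : ℝ) ^ n with hT_def
  set ε : ℝ := (0.5 : ℝ) ^ n with hε_def
  have hε0 : 0 < ε := pow_pos (by norm_num) n
  have hε2 : ε ≤ 1 / 2 := by
    calc ε ≤ (0.5 : ℝ) ^ 1 := pow_le_pow_of_le_one (by norm_num) (by norm_num) (by omega)
    _ = 1 / 2 := by norm_num
  have hεT : ε * T = 1 := by
    rw [hε_def, hT_def, ← mul_pow]; norm_num
  have hF5 : (5 : ℝ) ≤ F := by
    have h5 : (5 : ℕ) ≤ Nat.fib n := by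
      have : Nat.fib 5 ≤ Nat.fib n := Nat.fib_mono (by omega)
      simpa [show Nat.fib 5 = 5 by decide] using this
    rw [hF_def]; exact_mod_cast h5
  have hFT : 2 * F ≤ T := by
    have := two_fib_le_two_pow n
    rw [hF_def, hT_def]
    exact_mod_cast this
  have hεF : ε * F ≤ 1 / 2 := by nlinarith
  set g : ℝ → ℝ := fun x => x * (x - F) * (x - T) - 1 with hg_def
  have hg : Continuous g := by fun_prop
  -- root near 0
  have hgε : 0 ≤ g ε := by
    show (0:ℝ) ≤ ε * (ε - F) * (ε - T) - 1
    nlinarith [sq_nonneg ε, mul_pos hε0 hε0]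
  obtain ⟨α1, hmem1, hroot1⟩ :=
    (intermediate_value_Icc hε0.le hg.continuousOn)
      (show (0:ℝ) ∈ Set.Icc (g 0) (g ε) by
        constructor
        · show (0:ℝ) * (0 - F) * (0 - T) - 1 ≤ 0; nlinarith
        · exact hgε)
  -- root near F
  have hgFε : 0 ≤ g (F - ε) := by
    show (0:ℝ) ≤ (F - ε) * ((F - ε) - F) * ((F - ε) - T) - 1
    nlinarith [sq_nonneg ε, mul_pos hε0 hε0]
  obtain ⟨α2, hmem2, hroot2⟩ :=
    (intermediate_value_Icc' (show F - ε ≤ F by linarith) hg.continuousOn)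
      (show (0:ℝ) ∈ Set.Icc (g F) (g (F - ε)) by
        constructor
        · show F * (F - F) * (F - T) - 1 ≤ 0; nlinarith
        · exact hgFε)
  -- root near T
  have hgTε : 0 ≤ g (T + ε) := by
    show (0:ℝ) ≤ (T + ε) * ((T + ε) - F) * ((T + ε) - T) - 1
    nlinarith [sq_nonneg ε, mul_pos hε0 hε0]
  obtain ⟨α3, hmem3, hroot3⟩ :=
    (intermediate_value_Icc (show T ≤ T + ε by linarith) hg.continuousOn)
      (show (0:ℝ) ∈ Set.Icc (g T) (g (T + ε)) by
        constructor
        · show T * (T - F) * (T - T) - 1 ≤ 0; nlinarith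
        · exact hgTε)
  obtain ⟨h1a, h1b⟩ := hmem1
  obtain ⟨h2a, h2b⟩ := hmem2
  obtain ⟨h3a, h3b⟩ := hmem3
  have h12 : α1 < α2 := by linarith
  have h23 : α2 < α3 := by linarith
  refine ⟨![α1, α2, α3], ?_, ?_, ?_, ?_, ?_, ?_, ?_⟩
  · simpa using h12
  · simpa using h23
  · intro i
    fin_cases i
    · simpa using hroot1
    · simpa using hroot2
    · simpa using hroot3
  · intro x hx
    have := cubic_roots (-(F + T)) (F * T) (-1) α1 α2 α3 x h12.ne (h12.trans h23).ne h23.ne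
      (by linear_combination hroot1) (by linear_combination hroot2)
      (by linear_combination hroot3) (by linear_combination hx)
    simpa using this
  · simp only [Matrix.cons_val_zero]
    rw [abs_le]; constructor <;> [linarith; linarith]
  · simp only [Matrix.cons_val_one, Matrix.head_cons, Matrix.cons_val_zero]
    rw [abs_le]; constructor <;> [linarith; linarith]
  · simp only [Matrix.cons_val_two, Matrix.tail_cons, Matrix.head_cons]
    rw [abs_le]; constructor <;> [linarith; linarith]
end

section
/- Let n ≥ 29 be an integer, let F_n be the n-th Fibonacci number, set G_1 = 0, G_2 = F_n, G_3 = 2^n, let α^(1) < α^(2) < α^(3) be the three real roots of f_n(X) = X·(X − F_n)·(X − 2^n) − 1, and set l_i^(k) = log|α^(k) − G_i|. Then for any i, j, k, l ∈ {1,2,3} with i ≠ j and k ≠ l, the quantity R = |l_i^(k)·l_j^(l) − l_i^(l)·l_j^(k)| is independent of the choice of i, j, k, l, and it satisfies n² < R < 2n². -/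
private lemma two_fib_le (m : ℕ) : 2 * Nat.fib m ≤ 2 ^ m := by
  induction m using Nat.strong_induction_on with
  | _ m ih =>
    match m with
    | 0 => simp
    | 1 => simp
    | (k+2) =>
      have h1 := ih k (by omega)
      have h2 := ih (k+1) (by omega)
      have h3 : (2:ℕ)^(k+2) = 2^(k+1) + 2*2^k := by ring
      rw [Nat.fib_add_two]
      omega

private lemma fib_lower (k : ℕ) : 3 ^ k * 514229 ≤ 2 ^ k * Nat.fib (29 + k) := by
  induction k with
  | zero => simp [show Nat.fib 29 = 514229 from by decide]
  | succ k ih =>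
    have e1 := Nat.fib_add_two (n := 28+k)
    rw [show 28+k+2 = 30+k from by omega, show 28+k+1 = 29+k from by omega] at e1
    have e2 := Nat.fib_add_two (n := 27+k)
    rw [show 27+k+2 = 29+k from by omega, show 27+k+1 = 28+k from by omega] at e2
    have hm : Nat.fib (27+k) ≤ Nat.fib (28+k) := Nat.fib_mono (by omega)
    have hstep : 3 * Nat.fib (29 + k) ≤ 2 * Nat.fib (30 + k) := by omega
    calc 3^(k+1)*514229 = 3*(3^k*514229) := by ring
      _ ≤ 3*(2^k*Nat.fib (29+k)) := Nat.mul_le_mul_left _ ih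
      _ = 2^k*(3*Nat.fib (29+k)) := by ring
      _ ≤ 2^k*(2*Nat.fib (30+k)) := Nat.mul_le_mul_left _ hstep
      _ = 2^(k+1)*Nat.fib (30+k) := by ring
      _ = 2^(k+1)*Nat.fib (29+(k+1)) := by rw [show 29+(k+1) = 30+k from by omega]

private lemma three_n_le (k : ℕ) : 3 * (29 + k) ≤ 2 ^ (29 + k) := by
  induction k with
  | zero => norm_num
  | succ k ih =>
    have h : (2:ℕ)^(29+(k+1)) = 2^(29+k) + 2^(29+k) := by ring
    have h2 : 3 ≤ 2^(29+k) := le_trans (by norm_num) (Nat.pow_le_pow_right (by norm_num) (by omega) : 2^29 ≤ 2^(29+k))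
    omega

private lemma log_three_halves : (2:ℝ)/5 ≤ Real.log (3/2) := by
  have h1 : Real.exp 1 < 2.7182818286 := Real.exp_one_lt_d9
  have hexp : Real.exp 2 < (3/2:ℝ)^5 := by
    have h2 : Real.exp 2 = Real.exp 1 * Real.exp 1 := by
      rw [← Real.exp_add]; norm_num
    nlinarith [Real.exp_pos 1]
  have h3 : Real.log (Real.exp 2) < Real.log ((3/2:ℝ)^5) := Real.log_lt_log (Real.exp_pos 2) hexp
  rw [Real.log_exp, Real.log_pow] at h3
  push_cast at h3
  linarith

private lemma log_upper {z w η : ℝ} (hz : 0 < z) (hη : 0 ≤ η) (hw : 0 < w)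
    (h : w ≤ z*(1+η)) : Real.log w ≤ Real.log z + η := by
  have h1 : Real.log w ≤ Real.log (z*(1+η)) :=
    (Real.log_le_log_iff hw (by positivity)).mpr h
  rw [Real.log_mul (ne_of_gt hz) (by positivity)] at h1
  have h2 := Real.log_le_sub_one_of_pos (show (0:ℝ) < 1+η by linarith)
  linarith

private lemma log_lower {z w η : ℝ} (hz : 0 < z) (hη : 0 ≤ η) (hη2 : η ≤ 1/2)
    (h : z*(1-η) ≤ w) : Real.log z - 2*η ≤ Real.log w := by
  have hpos : (0:ℝ) < 1 - η := by linarith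
  have hw : 0 < w := lt_of_lt_of_le (by positivity) h
  have h1 : Real.log (z*(1-η)) ≤ Real.log w :=
    (Real.log_le_log_iff (by positivity) hw).mpr h
  rw [Real.log_mul (ne_of_gt hz) (ne_of_gt hpos)] at h1
  have h2 : Real.log (1-η) = - Real.log (1-η)⁻¹ := by rw [Real.log_inv]; ring
  have h3 : Real.log (1-η)⁻¹ ≤ (1-η)⁻¹ - 1 := Real.log_le_sub_one_of_pos (by positivity)
  have h4 : (1-η)⁻¹ ≤ 1 + 2*η := by
    rw [inv_eq_one_div, div_le_iff₀ hpos]; nlinarith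
  linarith

private lemma transfer_lt {P Q s d C : ℝ} (hs : P * s = 1) (hd : Q * d = 1)
    (hspos : 0 < s) (hdpos : 0 < d) (h : C * Q < P ^ 2) : C * s ^ 2 < d := by
  have h1 : (C*Q) * (s^2*d) < P^2 * (s^2*d) := mul_lt_mul_of_pos_right h (by positivity)
  have h2 : P^2*(s^2*d) = d := by linear_combination (P*s+1)*d*hs
  have h3 : (C*Q)*(s^2*d) = C*s^2 := by linear_combination C*s^2*hd
  linarith

private lemma transfer_le {P Q s d C D : ℝ} (hs : P * s = 1) (hd : Q * d = 1)
    (hspos : 0 < s) (hdpos : 0 < d) (h : C * Q ≤ D * P) : C * s ≤ D * d := by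
  have h1 : (C*Q) * (s*d) ≤ (D*P) * (s*d) := mul_le_mul_of_nonneg_right h (by positivity)
  have h2 : (C*Q)*(s*d) = C*s := by linear_combination C*s*hd
  have h3 : (D*P)*(s*d) = D*d := by linear_combination D*d*hs
  linarith

private lemma key3 (u v w : ℝ) (h : u*v*w = 1) :
    Real.log |u| + Real.log |v| + Real.log |w| = 0 := by
  have hu : u ≠ 0 := by rintro rfl; simp at h
  have hv : v ≠ 0 := by rintro rfl; simp at h
  have hw : w ≠ 0 := by rintro rfl; simp at h
  have habs : |u| * |v| * |w| = 1 := by rw [← abs_mul, ← abs_mul, h, abs_one]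
  rw [← Real.log_mul (abs_ne_zero.mpr hu) (abs_ne_zero.mpr hv),
    ← Real.log_mul (mul_ne_zero (abs_ne_zero.mpr hu) (abs_ne_zero.mpr hv)) (abs_ne_zero.mpr hw),
    habs, Real.log_one]

private lemma my_mul_inv_le_one {P s c : ℝ} (hc : P * s = 1) (hs : 0 < s) (hP : c ≤ P) :
    c * s ≤ 1 := by
  have := mul_le_mul_of_nonneg_right hP hs.le
  linarith

set_option maxHeartbeats 2000000 in
/-- The regulator-type quantity `R = |l i k · l j m − l i m · l j k|` (with
`l i k = log |α⁽ᵏ⁾ - Gᵢ|`, `i ≠ j`, `k ≠ m`) is independent of the choice of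
indices and satisfies `n² < R < 2n²`. -/
theorem regulator_estimate (n : ℕ) (hn : 29 ≤ n)
    (G α : Fin 3 → ℝ)
    (hG : G = ![0, (Nat.fib n : ℝ), 2 ^ n])
    (hord : α 0 < α 1 ∧ α 1 < α 2)
    (hroot : ∀ i, α i * (α i - (Nat.fib n : ℝ)) * (α i - 2 ^ n) - 1 = 0)
    (l : Fin 3 → Fin 3 → ℝ)
    (hl : ∀ i k, l i k = Real.log |α k - G i|) :
    (∀ i j k m i' j' k' m' : Fin 3, i ≠ j → k ≠ m → i' ≠ j' → k' ≠ m' →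
      |l i k * l j m - l i m * l j k| = |l i' k' * l j' m' - l i' m' * l j' k'|) ∧
    (∀ i j k m : Fin 3, i ≠ j → k ≠ m →
      (n : ℝ) ^ 2 < |l i k * l j m - l i m * l j k| ∧
      |l i k * l j m - l i m * l j k| < 2 * (n : ℝ) ^ 2) := by
  obtain ⟨h01, h12⟩ := hord
  obtain ⟨F, hFdef⟩ : ∃ x : ℝ, (Nat.fib n : ℝ) = x := ⟨_, rfl⟩
  obtain ⟨B, hBdef⟩ : ∃ x : ℝ, (2:ℝ) ^ n = x := ⟨_, rfl⟩
  rw [hFdef, hBdef] at hG hroot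
  -- basic positivity and size facts
  have hFn29 : (514229 : ℕ) ≤ Nat.fib n := by
    calc (514229:ℕ) = Nat.fib 29 := by decide
    _ ≤ Nat.fib n := Nat.fib_mono hn
  have hF0 : (514229 : ℝ) ≤ F := by rw [← hFdef]; exact_mod_cast hFn29
  have hFpos : 0 < F := by linarith
  have hBpos : 0 < B := by rw [← hBdef]; positivity
  have h2FB : 2 * F ≤ B := by
    rw [← hFdef, ← hBdef]
    exact_mod_cast two_fib_le n
  have hWpos : 0 < B - F := by linarith
  have hB2W : B ≤ 2 * (B - F) := by linarith
  have hFW : F ≤ B - F := by linarith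
  have h3nB : 3 * (n:ℝ) ≤ B := by
    rw [← hBdef]
    have := three_n_le (n - 29)
    rw [show 29 + (n-29) = n from by omega] at this
    exact_mod_cast this
  -- the tiny parameter δ and the auxiliary quantities
  obtain ⟨δ, hδdef⟩ : ∃ x : ℝ, B⁻¹ = x := ⟨_, rfl⟩
  have hδpos : 0 < δ := by rw [← hδdef]; exact inv_pos.mpr hBpos
  have hδc : B * δ = 1 := by rw [← hδdef]; exact mul_inv_cancel₀ (ne_of_gt hBpos)
  have hδhalf : δ ≤ 1/2 := by
    have := my_mul_inv_le_one hδc hδpos (show (2:ℝ) ≤ B by linarith)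
    linarith
  obtain ⟨s0, hs0def⟩ : ∃ x : ℝ, (F*(B-F))⁻¹ = x := ⟨_, rfl⟩
  obtain ⟨s1, hs1def⟩ : ∃ x : ℝ, (B*(B-F))⁻¹ = x := ⟨_, rfl⟩
  obtain ⟨t1, ht1def⟩ : ∃ x : ℝ, (F*B)⁻¹ = x := ⟨_, rfl⟩
  have ht1pos : 0 < t1 := by rw [← ht1def]; exact inv_pos.mpr (mul_pos hFpos hBpos)
  have hs0pos : 0 < s0 := by rw [← hs0def]; exact inv_pos.mpr (mul_pos hFpos hWpos)
  have hs1pos : 0 < s1 := by rw [← hs1def]; exact inv_pos.mpr (mul_pos hBpos hWpos)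
  have ht1c : (F*B) * t1 = 1 := by
    rw [← ht1def]; exact mul_inv_cancel₀ (ne_of_gt (mul_pos hFpos hBpos))
  have hs0c : (F*(B-F)) * s0 = 1 := by
    rw [← hs0def]; exact mul_inv_cancel₀ (ne_of_gt (mul_pos hFpos hWpos))
  have hs1c : (B*(B-F)) * s1 = 1 := by
    rw [← hs1def]; exact mul_inv_cancel₀ (ne_of_gt (mul_pos hBpos hWpos))
  have ht1le1 : t1 ≤ 1 := by
    have := my_mul_inv_le_one ht1c ht1pos (show (1:ℝ) ≤ F*B by nlinarith)
    linarith
  have hs0le1 : s0 ≤ 1 := by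
    have := my_mul_inv_le_one hs0c hs0pos (show (1:ℝ) ≤ F*(B-F) by nlinarith)
    linarith
  have hs1le1 : s1 ≤ 1 := by
    have := my_mul_inv_le_one hs1c hs1pos (show (1:ℝ) ≤ B*(B-F) by nlinarith)
    linarith
  -- Vieta
  have E0 := hroot 0
  have E1 := hroot 1
  have E2 := hroot 2
  have h01' : α 0^2 + α 0*α 1 + α 1^2 - (F+B)*(α 0 + α 1) + F*B = 0 := by
    have hfac : (α 0 - α 1) * (α 0^2 + α 0*α 1 + α 1^2 - (F+B)*(α 0+α 1) + F*B) = 0 := by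
      linear_combination E0 - E1
    rcases mul_eq_zero.mp hfac with h | h
    · exact absurd (sub_eq_zero.mp h) (ne_of_lt h01)
    · exact h
  have h12' : α 1^2 + α 1*α 2 + α 2^2 - (F+B)*(α 1 + α 2) + F*B = 0 := by
    have hfac : (α 1 - α 2) * (α 1^2 + α 1*α 2 + α 2^2 - (F+B)*(α 1+α 2) + F*B) = 0 := by
      linear_combination E1 - E2
    rcases mul_eq_zero.mp hfac with h | h
    · exact absurd (sub_eq_zero.mp h) (ne_of_lt h12)
    · exact h
  have he1 : α 0 + α 1 + α 2 = F + B := by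
    have hfac : (α 0 - α 2) * (α 0 + α 1 + α 2 - (F+B)) = 0 := by
      linear_combination h01' - h12'
    rcases mul_eq_zero.mp hfac with h | h
    · exact absurd (sub_eq_zero.mp h) (ne_of_lt (lt_trans h01 h12))
    · linarith [sub_eq_zero.mp h]
  have he2 : α 0*α 1 + α 0*α 2 + α 1*α 2 = F*B := by
    linear_combination (α 0 + α 1) * he1 - h01'
  have he3 : α 0 * α 1 * α 2 = 1 := by
    linear_combination E0 - α 0^2 * he1 + α 0 * he2
  have hfact : ∀ t : ℝ, t*(t-F)*(t-B) - 1 = (t - α 0)*(t - α 1)*(t - α 2) := by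
    intro t
    linear_combination t^2 * he1 - t * he2 + he3
  -- convenient small facts
  have hδ1 : δ ≤ 1 := by linarith
  have hFsq : 32 < F*F := by nlinarith only [hF0]
  have ht2le : t1*(1+δ) ≤ 2*t1 := by nlinarith only [mul_le_mul_of_nonneg_left hδ1 ht1pos.le]
  have hs0le2 : s0*(1+δ) ≤ 2*s0 := by nlinarith only [mul_le_mul_of_nonneg_left hδ1 hs0pos.le]
  have hs1le : s1*(1-δ) ≤ s1 := by nlinarith only [mul_nonneg hs1pos.le hδpos.le]
  have hs1ge0 : 0 ≤ s1*(1-δ) := mul_nonneg hs1pos.le (by linarith)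
  -- sign facts at the six test points
  have hsign1 : t1*(t1-F)*(t1-B) - 1 < 0 := by
    have exp1 : t1*(t1-F)*(t1-B) - 1 = t1^2*(t1-(F+B)) := by linear_combination ht1c
    rw [exp1]
    apply mul_neg_of_pos_of_neg (pow_pos ht1pos 2)
    linarith only [ht1le1, hF0, hBpos]
  have hsign2 : 0 < (t1*(1+δ))*((t1*(1+δ))-F)*((t1*(1+δ))-B) - 1 := by
    have exp2 : (t1*(1+δ))*((t1*(1+δ))-F)*((t1*(1+δ))-B) - 1
        = δ + (t1*(1+δ))^2*((t1*(1+δ))-(F+B)) := by linear_combination (1+δ) * ht1c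
    have hpoly : (4*(F+B)) * B < (F*B)^2 := by
      have c1 : 0 ≤ B*(B-2*F) := mul_nonneg hBpos.le (by linarith only [h2FB])
      have c2 : 0 < (B*B)*(F*F-6) := mul_pos (mul_pos hBpos hBpos) (by linarith only [hFsq])
      nlinarith only [c1, c2]
    have hkey : (4*(F+B)) * t1^2 < δ := transfer_lt ht1c hδc ht1pos hδpos hpoly
    have hsq : (t1*(1+δ))^2 ≤ 4*t1^2 := by
      nlinarith only [mul_nonneg (sq_nonneg t1) (show (0:ℝ) ≤ 4-(1+δ)^2 by nlinarith only [hδpos, hδhalf])]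
    have hprod : (t1*(1+δ))^2*(F+B) ≤ (4*t1^2)*(F+B) :=
      mul_le_mul_of_nonneg_right hsq (by linarith)
    have hcube : 0 < (t1*(1+δ))^2*(t1*(1+δ)) :=
      mul_pos (pow_pos (by nlinarith only [mul_pos ht1pos hδpos, ht1pos]) 2) (by nlinarith only [mul_pos ht1pos hδpos, ht1pos])
    rw [exp2]
    nlinarith only [hkey, hprod, hcube]
  have hsign4 : (F-s0)*((F-s0)-F)*((F-s0)-B) - 1 < 0 := by
    have exp4 : (F-s0)*((F-s0)-F)*((F-s0)-B) - 1 = s0^2*(F-(B-F)-s0) := by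
      linear_combination hs0c
    rw [exp4]
    apply mul_neg_of_pos_of_neg (pow_pos hs0pos 2)
    linarith only [hFW, hs0pos]
  have hsign3 : 0 < (F-s0*(1+δ))*((F-s0*(1+δ))-F)*((F-s0*(1+δ))-B) - 1 := by
    have exp3 : (F-s0*(1+δ))*((F-s0*(1+δ))-F)*((F-s0*(1+δ))-B) - 1
        = δ + (s0*(1+δ))^2*(F-(B-F)) - (s0*(1+δ))^3 := by
      linear_combination (1+δ) * hs0c
    have hpoly : (8*(B-F)) * B < (F*(B-F))^2 := by
      have c1 : 0 < ((B-F)*(B-F))*(F*F-16) := mul_pos (mul_pos hWpos hWpos) (by linarith only [hFsq])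
      have c2 : 0 ≤ ((B-F)*8)*(2*(B-F)-B) := mul_nonneg (by linarith only [hWpos]) (by linarith only [hB2W])
      nlinarith only [c1, c2]
    have hkey : (8*(B-F)) * s0^2 < δ := transfer_lt hs0c hδc hs0pos hδpos hpoly
    have hsq : (s0*(1+δ))^2 ≤ 4*s0^2 := by
      nlinarith only [mul_nonneg (sq_nonneg s0) (show (0:ℝ) ≤ 4-(1+δ)^2 by nlinarith only [hδpos, hδhalf])]
    have hQ : (s0*(1+δ))^2*((B-F)-F+(s0*(1+δ))) ≤ (4*s0^2)*(B-F) := by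
      apply mul_le_mul hsq (by linarith only [hs0le2, hs0le1, hF0]) _ (by positivity)
      have : 0 < s0*(1+δ) := by nlinarith only [mul_pos hs0pos hδpos, hs0pos]
      linarith only [this, hFW]
    rw [exp3]
    nlinarith only [hQ, hkey, mul_nonneg (sq_nonneg s0) hWpos.le]
  have hsign5 : 0 < (B+s1)*((B+s1)-F)*((B+s1)-B) - 1 := by
    have exp5 : (B+s1)*((B+s1)-F)*((B+s1)-B) - 1 = s1^2*(B+(B-F)+s1) := by
      linear_combination hs1c
    rw [exp5]
    exact mul_pos (pow_pos hs1pos 2) (by linarith only [hBpos, hWpos, hs1pos])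
  have hsign6 : (B+s1*(1-δ))*((B+s1*(1-δ))-F)*((B+s1*(1-δ))-B) - 1 < 0 := by
    have exp6 : (B+s1*(1-δ))*((B+s1*(1-δ))-F)*((B+s1*(1-δ))-B) - 1
        = -δ + (s1*(1-δ))^2*(B+(B-F)+(s1*(1-δ))) := by
      linear_combination (1-δ) * hs1c
    have hpoly : (3*B) * B < (B*(B-F))^2 := by
      have c1 : 0 < (B*B)*((B-F)*(B-F)-3) := mul_pos (mul_pos hBpos hBpos) (by nlinarith only [hFW, hF0])
      nlinarith only [c1]
    have hkey : (3*B) * s1^2 < δ := transfer_lt hs1c hδc hs1pos hδpos hpoly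
    have hsq : (s1*(1-δ))^2 ≤ s1^2 := by
      nlinarith only [mul_nonneg (sq_nonneg s1) (show (0:ℝ) ≤ 2*δ-δ^2 by nlinarith only [hδpos, hδhalf])]
    have hQ : (s1*(1-δ))^2*(B+(B-F)+(s1*(1-δ))) ≤ s1^2*(3*B) := by
      apply mul_le_mul hsq (by linarith only [hs1le, hs1le1, h2FB, hFpos, hFW, hF0]) (by linarith only [hs1ge0, hWpos, hBpos]) (sq_nonneg s1)
    rw [exp6]
    nlinarith only [hQ, hkey]
  -- ordering of the test points
  have hord12 : t1 < t1*(1+δ) := by nlinarith only [mul_pos ht1pos hδpos, ht1pos]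
  have hord23 : t1*(1+δ) < F - s0*(1+δ) := by linarith only [ht2le, hs0le2, ht1le1, hs0le1, hF0]
  have hord34 : F - s0*(1+δ) < F - s0 := by nlinarith only [mul_pos hs0pos hδpos, hs0pos]
  have hord46 : F - s0 < B + s1*(1-δ) := by linarith only [hs0pos, hs1ge0, h2FB, hFpos]
  have hord65 : B + s1*(1-δ) < B + s1 := by nlinarith only [mul_pos hs1pos hδpos, hs1pos]
  -- roots via the intermediate value theorem
  have hcont : Continuous (fun t : ℝ => t*(t-F)*(t-B) - 1) := by fun_prop
  have hmem : ∀ r : ℝ, r*(r-F)*(r-B) - 1 = 0 → r = α 0 ∨ r = α 1 ∨ r = α 2 := by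
    intro r hr
    have h := hfact r
    rw [hr] at h
    rcases mul_eq_zero.mp h.symm with h' | h'
    · rcases mul_eq_zero.mp h' with h'' | h''
      · exact Or.inl (sub_eq_zero.mp h'')
      · exact Or.inr (Or.inl (sub_eq_zero.mp h''))
    · exact Or.inr (Or.inr (sub_eq_zero.mp h'))
  obtain ⟨r1, hr1mem, hr1z⟩ := intermediate_value_Ioo (le_of_lt hord12)
    hcont.continuousOn (Set.mem_Ioo.mpr ⟨hsign1, hsign2⟩)
  obtain ⟨r2, hr2mem, hr2z⟩ := intermediate_value_Ioo' (le_of_lt hord34)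
    hcont.continuousOn (Set.mem_Ioo.mpr ⟨hsign4, hsign3⟩)
  obtain ⟨r3, hr3mem, hr3z⟩ := intermediate_value_Ioo (le_of_lt hord65)
    hcont.continuousOn (Set.mem_Ioo.mpr ⟨hsign6, hsign5⟩)
  obtain ⟨hr1a, hr1b⟩ := hr1mem
  obtain ⟨hr2a, hr2b⟩ := hr2mem
  obtain ⟨hr3a, hr3b⟩ := hr3mem
  have hID : (t1 < α 0 ∧ α 0 < t1*(1+δ)) ∧ (F - s0*(1+δ) < α 1 ∧ α 1 < F - s0)
      ∧ (B + s1*(1-δ) < α 2 ∧ α 2 < B + s1) := by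
    rcases hmem r1 hr1z with e1 | e1 | e1 <;>
      rcases hmem r2 hr2z with e2 | e2 | e2 <;>
      rcases hmem r3 hr3z with e3 | e3 | e3 <;>
      rw [e1] at hr1a hr1b <;> rw [e2] at hr2a hr2b <;> rw [e3] at hr3a hr3b <;>
      first
        | exact ⟨⟨hr1a, hr1b⟩, ⟨hr2a, hr2b⟩, ⟨hr3a, hr3b⟩⟩
        | (exfalso;
           linarith only [h01, h12, hr1a, hr1b, hr2a, hr2b, hr3a, hr3b,
             hord12, hord23, hord34, hord46, hord65])
  obtain ⟨⟨ha0a, ha0b⟩, ⟨ha1a, ha1b⟩, ⟨ha2a, ha2b⟩⟩ := hID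
  -- logarithmic quantities
  obtain ⟨rA, hrAdef⟩ : ∃ x : ℝ, Real.log F = x := ⟨_, rfl⟩
  obtain ⟨rB, hrBdef⟩ : ∃ x : ℝ, Real.log B = x := ⟨_, rfl⟩
  obtain ⟨rC, hrCdef⟩ : ∃ x : ℝ, Real.log (B-F) = x := ⟨_, rfl⟩
  have hn' : (29:ℝ) ≤ (n:ℝ) := by exact_mod_cast hn
  have hlogt1 : Real.log t1 = -(rA+rB) := by
    rw [← ht1def, Real.log_inv, Real.log_mul (ne_of_gt hFpos) (ne_of_gt hBpos), hrAdef, hrBdef]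
  have hlogs0 : Real.log s0 = -(rA+rC) := by
    rw [← hs0def, Real.log_inv, Real.log_mul (ne_of_gt hFpos) (ne_of_gt hWpos), hrAdef, hrCdef]
  have hG0 : G 0 = 0 := by rw [hG]; simp
  have hG1 : G 1 = F := by rw [hG]; simp
  have hG2 : G 2 = B := by rw [hG]; simp
  -- positivity of distances
  have hα0pos : 0 < α 0 := lt_trans ht1pos ha0a
  have hα1pos : 0 < α 1 := by linarith only [ha1a, hs0le2, hs0le1, hF0]
  have hFα0 : 0 < F - α 0 := by linarith only [ha0b, ht2le, ht1le1, hF0]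
  have hFα1 : 0 < F - α 1 := by linarith only [ha1b, hs0pos]
  -- the four entries
  have hx : l 0 0 = Real.log (α 0) := by rw [hl 0 0, hG0, sub_zero, abs_of_pos hα0pos]
  have hy : l 0 1 = Real.log (α 1) := by rw [hl 0 1, hG0, sub_zero, abs_of_pos hα1pos]
  have hp : l 1 0 = Real.log (F - α 0) := by
    rw [hl 1 0, hG1, abs_of_neg (by linarith only [hFα0] : α 0 - F < 0), neg_sub]
  have hq : l 1 1 = Real.log (F - α 1) := by
    rw [hl 1 1, hG1, abs_of_neg (by linarith only [hFα1] : α 1 - F < 0), neg_sub]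
  -- bounds on the four entries
  have hx_lo : -(rA+rB) ≤ l 0 0 := by
    rw [hx, ← hlogt1]
    exact (Real.log_le_log_iff ht1pos hα0pos).mpr (le_of_lt ha0a)
  have hx_hi : l 0 0 ≤ -(rA+rB) + δ := by
    rw [hx, ← hlogt1]
    exact log_upper ht1pos hδpos.le hα0pos (by linarith only [ha0b])
  have hq_lo : -(rA+rC) ≤ l 1 1 := by
    rw [hq, ← hlogs0]
    exact (Real.log_le_log_iff hs0pos hFα1).mpr (by linarith only [ha1b])
  have hq_hi : l 1 1 ≤ -(rA+rC) + δ := by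
    rw [hq, ← hlogs0]
    exact log_upper hs0pos hδpos.le hFα1 (by linarith only [ha1a])
  have h2s0Fδ : 2*s0 ≤ F*δ := by
    apply transfer_le hs0c hδc hs0pos hδpos
    nlinarith only [mul_nonneg hWpos.le (by linarith only [hFsq] : (0:ℝ) ≤ F*F-4), hB2W]
  have h2t1Fδ : 2*t1 ≤ F*δ := by
    apply transfer_le ht1c hδc ht1pos hδpos
    nlinarith only [mul_nonneg hBpos.le (by linarith only [hFsq] : (0:ℝ) ≤ F*F-2)]
  have hy_hi : l 0 1 ≤ rA := by
    rw [hy, ← hrAdef]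
    exact (Real.log_le_log_iff hα1pos hFpos).mpr (by linarith only [ha1b, hs0pos])
  have hy_lo : rA - 2*δ ≤ l 0 1 := by
    rw [hy, ← hrAdef]
    exact log_lower hFpos hδpos.le hδhalf (by nlinarith only [ha1a, h2s0Fδ, hs0le2])
  have hp_hi : l 1 0 ≤ rA := by
    rw [hp, ← hrAdef]
    exact (Real.log_le_log_iff hFα0 hFpos).mpr (by linarith only [hα0pos])
  have hp_lo : rA - 2*δ ≤ l 1 0 := by
    rw [hp, ← hrAdef]
    exact log_lower hFpos hδpos.le hδhalf (by nlinarith only [ha0b, h2t1Fδ, ht2le])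
  -- numeric bounds for rA, rB, rC
  have hL2lo := Real.log_two_gt_d9
  have hL2hi := Real.log_two_lt_d9
  have hrBval : rB = n * Real.log 2 := by rw [← hrBdef, ← hBdef, Real.log_pow]
  have hrB_lo : 0.6931471803 * (n:ℝ) ≤ rB := by
    rw [hrBval]; nlinarith only [hL2lo, (Nat.cast_nonneg n : (0:ℝ) ≤ (n:ℝ))]
  have hrB_hi : rB ≤ 0.6931471808 * (n:ℝ) := by
    rw [hrBval]; nlinarith only [hL2hi, (Nat.cast_nonneg n : (0:ℝ) ≤ (n:ℝ))]
  have hrA_hi : rA ≤ rB := by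
    rw [← hrAdef, ← hrBdef]
    exact (Real.log_le_log_iff hFpos hBpos).mpr (by linarith only [h2FB, hFpos])
  have hrC_hi : rC ≤ rB := by
    rw [← hrCdef, ← hrBdef]
    exact (Real.log_le_log_iff hWpos hBpos).mpr (by linarith only [hFpos])
  have hrC_lo : rB - Real.log 2 ≤ rC := by
    have h1 : Real.log (B/2) ≤ rC := by
      rw [← hrCdef]
      exact (Real.log_le_log_iff (by linarith only [hBpos] : (0:ℝ) < B/2) hWpos).mpr
        (by linarith only [hB2W])
    rw [Real.log_div (ne_of_gt hBpos) (by norm_num), hrBdef] at h1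
    linarith only [h1]
  have hrC_lo' : 0.6931471803 * (n:ℝ) - 0.6931471808 ≤ rC := by
    linarith only [hrC_lo, hrB_lo, hL2hi]
  have hrA_lo : 12.476 + ((n:ℝ) - 29) * (2/5) ≤ rA := by
    have hkn : (((n - 29 : ℕ)):ℝ) = (n:ℝ) - 29 := by
      rw [Nat.cast_sub hn]; norm_num
    have hcast : (3:ℝ)^(n-29) * 514229 ≤ 2^(n-29) * F := by
      rw [← hFdef]
      have := fib_lower (n - 29)
      rw [show 29 + (n-29) = n from by omega] at this
      exact_mod_cast this
    have hFlow : (3/2:ℝ)^(n-29) * 262144 ≤ F := by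
      rw [div_pow, div_mul_eq_mul_div, div_le_iff₀ (by positivity : (0:ℝ) < (2:ℝ)^(n-29))]
      nlinarith only [hcast, pow_nonneg (by norm_num : (0:ℝ) ≤ 3) (n-29)]
    have hlog : Real.log ((3/2:ℝ)^(n-29) * 262144) ≤ rA := by
      rw [← hrAdef]
      exact (Real.log_le_log_iff (by positivity) hFpos).mpr hFlow
    rw [Real.log_mul (by positivity) (by norm_num), Real.log_pow,
      show (262144:ℝ) = 2^(18:ℕ) from by norm_num, Real.log_pow] at hlog
    have h32 := log_three_halves
    have hkn0 : (0:ℝ) ≤ (n:ℝ) - 29 := by linarith only [hn']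
    rw [hkn] at hlog
    push_cast at hlog
    nlinarith only [hlog, h32, hL2lo, hkn0]
  have hrA_pos : 0 < rA := by nlinarith only [hrA_lo, hn']
  -- bounds on the 2×2 minor D = l00*l11 - l01*l10
  have hrC_pos : 0 < rC := by nlinarith only [hrC_lo', hn']
  have hrB_pos : 0 < rB := by nlinarith only [hrB_lo, hn']
  have hA1δ : 0 ≤ (rA+rB) - δ := by linarith only [hrA_pos, hrB_pos, hδhalf, hrB_lo, hn']
  have hA2δ : 0 ≤ (rA+rC) - δ := by linarith only [hrA_pos, hrC_lo', hn', hδhalf]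
  have h1 : (rA+rB) - δ ≤ -(l 0 0) := by linarith only [hx_hi]
  have h1' : -(l 0 0) ≤ rA+rB := by linarith only [hx_lo]
  have h2 : (rA+rC) - δ ≤ -(l 1 1) := by linarith only [hq_hi]
  have h2' : -(l 1 1) ≤ rA+rC := by linarith only [hq_lo]
  have hxq_lo : ((rA+rB)-δ)*((rA+rC)-δ) ≤ l 0 0 * l 1 1 := by
    have := mul_le_mul h1 h2 hA2δ (le_trans hA1δ h1)
    nlinarith only [this]
  have hxq_hi : l 0 0 * l 1 1 ≤ (rA+rB)*(rA+rC) := by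
    have := mul_le_mul h1' h2' (le_trans hA2δ h2) (by linarith only [hA1δ, hδpos, hδhalf])
    nlinarith only [this]
  have hrA2δ : 0 ≤ rA - 2*δ := by linarith only [hrA_lo, hδhalf, hn']
  have hyp_lo : (rA-2*δ)*(rA-2*δ) ≤ l 0 1 * l 1 0 :=
    mul_le_mul hy_lo hp_lo hrA2δ (by linarith only [hy_lo, hrA2δ])
  have hyp_hi : l 0 1 * l 1 0 ≤ rA*rA :=
    mul_le_mul hy_hi hp_hi (by linarith only [hp_lo, hrA2δ]) hrA_pos.le
  have hsum3n : 2*rA + rB + rC ≤ 3*(n:ℝ) := by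
    nlinarith only [hrA_hi, hrC_hi, hrB_hi, hrB_lo, hn']
  have hδ3n : δ * (3*(n:ℝ)) ≤ 1 := by
    have := mul_le_mul_of_nonneg_left h3nB hδpos.le
    nlinarith only [this, hδc]
  have hδsum : δ*(2*rA+rB+rC) ≤ 1 :=
    le_trans (mul_le_mul_of_nonneg_left hsum3n hδpos.le) hδ3n
  have hδ4rA : δ*(4*rA) ≤ 1 := by
    have h4 : 4*rA ≤ 3*(n:ℝ) := by nlinarith only [hrA_hi, hrB_hi, hrB_lo, hn']
    exact le_trans (mul_le_mul_of_nonneg_left h4 hδpos.le) hδ3n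
  have hD_lo : rA*rB + rA*rC + rB*rC - 1 ≤ l 0 0 * l 1 1 - l 0 1 * l 1 0 := by
    nlinarith only [hxq_lo, hyp_hi, hδsum, sq_nonneg δ]
  have hD_hi : l 0 0 * l 1 1 - l 0 1 * l 1 0 ≤ rA*rB + rA*rC + rB*rC + 1 := by
    nlinarith only [hxq_hi, hyp_lo, hδ4rA, sq_nonneg δ]
  have hS_lo : (n:ℝ)^2 + 2 ≤ rA*rB + rA*rC + rB*rC := by
    have pa : (0:ℝ) ≤ 12.476 + ((n:ℝ)-29)*(2/5) := by nlinarith only [hn']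
    have pb : (0:ℝ) ≤ 0.6931471803*(n:ℝ) := by nlinarith only [hn']
    have pc : (0:ℝ) ≤ 0.6931471803*(n:ℝ) - 0.6931471808 := by nlinarith only [hn']
    have m1 : (12.476 + ((n:ℝ)-29)*(2/5)) * (0.6931471803*(n:ℝ)) ≤ rA*rB :=
      mul_le_mul hrA_lo hrB_lo pb hrA_pos.le
    have m2 : (12.476 + ((n:ℝ)-29)*(2/5)) * (0.6931471803*(n:ℝ) - 0.6931471808) ≤ rA*rC :=
      mul_le_mul hrA_lo hrC_lo' pc hrA_pos.le
    have m3 : (0.6931471803*(n:ℝ)) * (0.6931471803*(n:ℝ) - 0.6931471808) ≤ rB*rC :=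
      mul_le_mul hrB_lo hrC_lo' pc hrB_pos.le
    nlinarith only [m1, m2, m3, hn', sq_nonneg ((n:ℝ)-29)]
  have hS_hi : rA*rB + rA*rC + rB*rC ≤ 2*(n:ℝ)^2 - 2 := by
    have hrA_hi' : rA ≤ 0.6931471808*(n:ℝ) := le_trans hrA_hi hrB_hi
    have hrC_hi' : rC ≤ 0.6931471808*(n:ℝ) := le_trans hrC_hi hrB_hi
    have pu : (0:ℝ) ≤ 0.6931471808*(n:ℝ) := by nlinarith only [hn']
    have u1 : rA*rB ≤ (0.6931471808*(n:ℝ))*(0.6931471808*(n:ℝ)) :=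
      mul_le_mul hrA_hi' hrB_hi hrB_pos.le pu
    have u2 : rA*rC ≤ (0.6931471808*(n:ℝ))*(0.6931471808*(n:ℝ)) :=
      mul_le_mul hrA_hi' hrC_hi' hrC_pos.le pu
    have u3 : rB*rC ≤ (0.6931471808*(n:ℝ))*(0.6931471808*(n:ℝ)) :=
      mul_le_mul hrB_hi hrC_hi' hrC_pos.le pu
    nlinarith only [u1, u2, u3, hn', sq_nonneg ((n:ℝ)-29)]
  have hDlo2 : (n:ℝ)^2 < l 0 0 * l 1 1 - l 0 1 * l 1 0 := by linarith only [hD_lo, hS_lo]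
  have hDhi2 : l 0 0 * l 1 1 - l 0 1 * l 1 0 < 2*(n:ℝ)^2 := by linarith only [hD_hi, hS_hi]
  have hDpos : 0 < l 0 0 * l 1 1 - l 0 1 * l 1 0 := by
    have := sq_nonneg (n:ℝ)
    linarith only [this, hDlo2]
  -- row and column sums of the matrix (l i k) vanish
  have hrow0 : (α 0 - G 0) * (α 1 - G 0) * (α 2 - G 0) = 1 := by
    rw [hG0]; linear_combination he3
  have hrow1 : (α 0 - G 1) * (α 1 - G 1) * (α 2 - G 1) = 1 := by
    rw [hG1]; linear_combination hfact F
  have hrow2 : (α 0 - G 2) * (α 1 - G 2) * (α 2 - G 2) = 1 := by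
    rw [hG2]; linear_combination hfact B
  have hprodrow : ∀ i : Fin 3, (α 0 - G i) * (α 1 - G i) * (α 2 - G i) = 1 := by
    intro i; fin_cases i
    · exact hrow0
    · exact hrow1
    · exact hrow2
  have hprodcol : ∀ k : Fin 3, (α k - G 0) * (α k - G 1) * (α k - G 2) = 1 := by
    intro k; rw [hG0, hG1, hG2]; linear_combination hroot k
  have hrowsum : ∀ i : Fin 3, l i 0 + l i 1 + l i 2 = 0 := by
    intro i; rw [hl i 0, hl i 1, hl i 2]; exact key3 _ _ _ (hprodrow i)
  have hcolsum : ∀ k : Fin 3, l 0 k + l 1 k + l 2 k = 0 := by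
    intro k; rw [hl 0 k, hl 1 k, hl 2 k]; exact key3 _ _ _ (hprodcol k)
  -- all 2×2 minors have the same absolute value
  have e02 : l 0 2 = - l 0 0 - l 0 1 := by linarith only [hrowsum 0]
  have e12 : l 1 2 = - l 1 0 - l 1 1 := by linarith only [hrowsum 1]
  have e20 : l 2 0 = - l 0 0 - l 1 0 := by linarith only [hcolsum 0]
  have e21 : l 2 1 = - l 0 1 - l 1 1 := by linarith only [hcolsum 1]
  have e22 : l 2 2 = l 0 0 + l 0 1 + l 1 0 + l 1 1 := by
    linarith only [hrowsum 2, e20, e21]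
  have claim : ∀ i j k m : Fin 3, i ≠ j → k ≠ m →
      |l i k * l j m - l i m * l j k| = |l 0 0 * l 1 1 - l 0 1 * l 1 0| := by
    have hfin : ∀ v : Fin 3, v = 0 ∨ v = 1 ∨ v = 2 := by decide
    intro i j k m hij hkm
    rcases hfin i with rfl|rfl|rfl <;> rcases hfin j with rfl|rfl|rfl <;>
      rcases hfin k with rfl|rfl|rfl <;> rcases hfin m with rfl|rfl|rfl <;>
      first
        | exact absurd rfl hij
        | exact absurd rfl hkm
        | (try simp only [e02, e12, e20, e21, e22]
           first
             | done
             | (rw [abs_eq_abs]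
                first
                  | (left; ring1)
                  | (right; ring1)))
  constructor
  · intro i j k m i' j' k' m' hij hkm hij' hkm'
    rw [claim i j k m hij hkm, claim i' j' k' m' hij' hkm']
  · intro i j k m hij hkm
    rw [claim i j k m hij hkm, abs_of_pos hDpos]
    exact ⟨hDlo2, hDhi2⟩
end

section
/- Let n ≥ 29 be an integer, let F_n be the n-th Fibonacci number, let α^(1) < α^(2) < α^(3) be the three real roots of f_n(X) = X·(X − F_n)·(X − 2^n) − 1, let (x, y) be an integer solution of x·(x − F_n·y)·(x − 2^n·y) − y³ = ±1 with |y| ≥ 2, set β^(i) = x − α^(i)·y for i = 1,2,3, and let j ∈ {1,2,3} be such that |β^(j)| = min{|β^(1)|, |β^(2)|, |β^(3)|}, with {j, k, l} = {1,2,3}. Then |β^(j)| ≤ 4 / (y² · |α^(l) − α^(j)| · |α^(k) − α^(j)|), and |β^(i)| ≥ |y| · |α^(i) − α^(j)| / 2 for i = k and i = l. -/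
/-- Size estimates for `β⁽ⁱ⁾ = x - α⁽ⁱ⁾ y`, where `(x, y)` is a solution of the
Thue equation with `|y| ≥ 2` of type `j` (i.e. `|β⁽ʲ⁾|` is minimal) and
`{j, k, l} = {1, 2, 3}`. -/
theorem beta_estimates (n : ℕ) (hn : 29 ≤ n)
    (α : Fin 3 → ℝ)
    (hord : α 0 < α 1 ∧ α 1 < α 2)
    (hroot : ∀ i, α i * (α i - (Nat.fib n : ℝ)) * (α i - 2 ^ n) - 1 = 0)
    (x y : ℤ)
    (heq : x * (x - (Nat.fib n : ℤ) * y) * (x - 2 ^ n * y) - y ^ 3 = 1 ∨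
           x * (x - (Nat.fib n : ℤ) * y) * (x - 2 ^ n * y) - y ^ 3 = -1)
    (hy : 2 ≤ |y|)
    (β : Fin 3 → ℝ) (hβ : ∀ i, β i = (x : ℝ) - α i * (y : ℝ))
    (j k l : Fin 3) (hjk : j ≠ k) (hkl : k ≠ l) (hjl : j ≠ l)
    (hmin : ∀ i, |β j| ≤ |β i|) :
    |β j| ≤ 4 / ((y : ℝ) ^ 2 * |α l - α j| * |α k - α j|) ∧
    |β k| ≥ |(y : ℝ)| * |α k - α j| / 2 ∧
    |β l| ≥ |(y : ℝ)| * |α l - α j| / 2 := by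
  have h01 := hord.1
  have h12 := hord.2
  -- symmetric function identities
  have g0 : ((α 0 + α 1 + α 2) - ((Nat.fib n : ℝ) + 2 ^ n)) * (α 0)^2 +
      ((Nat.fib n : ℝ) * 2 ^ n - (α 0 * α 1 + α 0 * α 2 + α 1 * α 2)) * α 0 +
      (α 0 * α 1 * α 2 - 1) = 0 := by linear_combination hroot 0
  have g1 : ((α 0 + α 1 + α 2) - ((Nat.fib n : ℝ) + 2 ^ n)) * (α 1)^2 +
      ((Nat.fib n : ℝ) * 2 ^ n - (α 0 * α 1 + α 0 * α 2 + α 1 * α 2)) * α 1 +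
      (α 0 * α 1 * α 2 - 1) = 0 := by linear_combination hroot 1
  have g2 : ((α 0 + α 1 + α 2) - ((Nat.fib n : ℝ) + 2 ^ n)) * (α 2)^2 +
      ((Nat.fib n : ℝ) * 2 ^ n - (α 0 * α 1 + α 0 * α 2 + α 1 * α 2)) * α 2 +
      (α 0 * α 1 * α 2 - 1) = 0 := by linear_combination hroot 2
  have d10 : α 1 - α 0 ≠ 0 := sub_ne_zero.mpr h01.ne'
  have d21 : α 2 - α 1 ≠ 0 := sub_ne_zero.mpr h12.ne'
  have d20 : α 2 - α 0 ≠ 0 := sub_ne_zero.mpr (h01.trans h12).ne'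
  have e1 : ((α 0 + α 1 + α 2) - ((Nat.fib n : ℝ) + 2 ^ n)) * (α 1 + α 0) +
      ((Nat.fib n : ℝ) * 2 ^ n - (α 0 * α 1 + α 0 * α 2 + α 1 * α 2)) = 0 := by
    have h : (α 1 - α 0) * (((α 0 + α 1 + α 2) - ((Nat.fib n : ℝ) + 2 ^ n)) * (α 1 + α 0) +
        ((Nat.fib n : ℝ) * 2 ^ n - (α 0 * α 1 + α 0 * α 2 + α 1 * α 2))) = 0 := by
      linear_combination g1 - g0
    exact (mul_eq_zero.mp h).resolve_left d10
  have e2 : ((α 0 + α 1 + α 2) - ((Nat.fib n : ℝ) + 2 ^ n)) * (α 2 + α 1) +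
      ((Nat.fib n : ℝ) * 2 ^ n - (α 0 * α 1 + α 0 * α 2 + α 1 * α 2)) = 0 := by
    have h : (α 2 - α 1) * (((α 0 + α 1 + α 2) - ((Nat.fib n : ℝ) + 2 ^ n)) * (α 2 + α 1) +
        ((Nat.fib n : ℝ) * 2 ^ n - (α 0 * α 1 + α 0 * α 2 + α 1 * α 2))) = 0 := by
      linear_combination g2 - g1
    exact (mul_eq_zero.mp h).resolve_left d21
  have ha : (α 0 + α 1 + α 2) - ((Nat.fib n : ℝ) + 2 ^ n) = 0 := by
    have h : (α 2 - α 0) * ((α 0 + α 1 + α 2) - ((Nat.fib n : ℝ) + 2 ^ n)) = 0 := by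
      linear_combination e2 - e1
    exact (mul_eq_zero.mp h).resolve_left d20
  have hb : (Nat.fib n : ℝ) * 2 ^ n - (α 0 * α 1 + α 0 * α 2 + α 1 * α 2) = 0 := by
    linear_combination e1 - (α 1 + α 0) * ha
  have hc : α 0 * α 1 * α 2 - 1 = 0 := by
    linear_combination g0 - (α 0)^2 * ha - α 0 * hb
  -- product identity
  have prodid : ((x : ℝ) - α 0 * y) * ((x : ℝ) - α 1 * y) * ((x : ℝ) - α 2 * y) =
      (x : ℝ) * ((x : ℝ) - (Nat.fib n : ℝ) * y) * ((x : ℝ) - 2 ^ n * y) - (y : ℝ) ^ 3 := by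
    linear_combination (-(x : ℝ)^2 * y) * ha + (-(x : ℝ) * y^2) * hb + (-(y : ℝ)^3) * hc
  have heqR : (x : ℝ) * ((x : ℝ) - (Nat.fib n : ℝ) * y) * ((x : ℝ) - 2 ^ n * y) - (y : ℝ) ^ 3 = 1 ∨
      (x : ℝ) * ((x : ℝ) - (Nat.fib n : ℝ) * y) * ((x : ℝ) - 2 ^ n * y) - (y : ℝ) ^ 3 = -1 := by
    rcases heq with h | h
    · left
      have h' : ((x * (x - (Nat.fib n : ℤ) * y) * (x - 2 ^ n * y) - y ^ 3 : ℤ) : ℝ) = 1 := by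
        rw [h]; norm_num
      push_cast at h'
      linarith [h']
    · right
      have h' : ((x * (x - (Nat.fib n : ℤ) * y) * (x - 2 ^ n * y) - y ^ 3 : ℤ) : ℝ) = -1 := by
        rw [h]; norm_num
      push_cast at h'
      linarith [h']
  have habs : |β 0 * β 1 * β 2| = 1 := by
    rw [hβ 0, hβ 1, hβ 2, prodid]
    rcases heqR with h | h <;> rw [h] <;> norm_num
  have hperm : β j * β k * β l = β 0 * β 1 * β 2 := by
    fin_cases j <;> fin_cases k <;> fin_cases l <;>
      first
        | exact absurd rfl hjk
        | exact absurd rfl hkl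
        | exact absurd rfl hjl
        | exact show β 0 * β 1 * β 2 = β 0 * β 1 * β 2 by ring
        | exact show β 0 * β 2 * β 1 = β 0 * β 1 * β 2 by ring
        | exact show β 1 * β 0 * β 2 = β 0 * β 1 * β 2 by ring
        | exact show β 1 * β 2 * β 0 = β 0 * β 1 * β 2 by ring
        | exact show β 2 * β 0 * β 1 = β 0 * β 1 * β 2 by ring
        | exact show β 2 * β 1 * β 0 = β 0 * β 1 * β 2 by ring
  have hprodjkl : |β j| * |β k| * |β l| = 1 := by
    rw [← abs_mul, ← abs_mul, hperm, habs]
  have hyR : (2 : ℝ) ≤ |(y : ℝ)| := by exact_mod_cast hy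
  have key : ∀ i : Fin 3, |β i| ≥ |(y : ℝ)| * |α i - α j| / 2 := by
    intro i
    have hd : β i - β j = (α j - α i) * y := by rw [hβ, hβ]; ring
    have h1 : |β i - β j| ≤ |β i| + |β j| := abs_sub _ _
    have h2 : |β i - β j| = |(y : ℝ)| * |α i - α j| := by
      rw [hd, abs_mul, abs_sub_comm, mul_comm]
    have h3 := hmin i
    linarith
  have hk2 := key k
  have hl2 := key l
  refine ⟨?_, hk2, hl2⟩
  have hne : ∀ i i' : Fin 3, i ≠ i' → α i ≠ α i' := by
    intro i i' h heq'
    fin_cases i <;> fin_cases i' <;>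
      first
        | exact h rfl
        | exact absurd heq' (ne_of_lt h01)
        | exact absurd heq' (ne_of_gt h01)
        | exact absurd heq' (ne_of_lt h12)
        | exact absurd heq' (ne_of_gt h12)
        | exact absurd heq' (ne_of_lt (h01.trans h12))
        | exact absurd heq' (ne_of_gt (h01.trans h12))
  have hA : 0 < |α k - α j| := abs_pos.mpr (sub_ne_zero.mpr (hne k j (Ne.symm hjk)))
  have hB : 0 < |α l - α j| := abs_pos.mpr (sub_ne_zero.mpr (hne l j (Ne.symm hjl)))
  have hy2 : (0 : ℝ) < (y : ℝ) ^ 2 := by rw [← sq_abs]; nlinarith [hyR]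
  have hpos : 0 < (y : ℝ) ^ 2 * |α l - α j| * |α k - α j| := by positivity
  rw [le_div_iff₀ hpos]
  have hsq : |(y : ℝ)| ^ 2 = (y : ℝ) ^ 2 := sq_abs _
  have h4 : |β j| * ((|(y : ℝ)| * |α k - α j| / 2) * (|(y : ℝ)| * |α l - α j| / 2)) ≤
      |β j| * (|β k| * |β l|) :=
    mul_le_mul_of_nonneg_left
      (mul_le_mul hk2 hl2 (by positivity) (abs_nonneg _)) (abs_nonneg _)
  have h5 : |β j| * (|β k| * |β l|) = 1 := by rw [← mul_assoc]; exact hprodjkl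
  calc |β j| * ((y : ℝ) ^ 2 * |α l - α j| * |α k - α j|)
      = 4 * (|β j| * ((|(y : ℝ)| * |α k - α j| / 2) * (|(y : ℝ)| * |α l - α j| / 2))) := by
        rw [← hsq]; ring
    _ ≤ 4 * (|β j| * (|β k| * |β l|)) := by linarith
    _ = 4 := by rw [h5]; norm_num
end
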